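/- For every continuous 2π-periodic function f : ℝ → ℂ, the Cesàro means of its Fourier partial sums, (1/N) Σ_{n=0}^{N-1} S_n(f), converge to f uniformly as N → ∞, where S_n(f)(t) = Σ_{k=-n}^{n} \hat f(k) e^{ikt} and \hat f(k) = (1/2π)∫_{-π}^{π} f(t) e^{-ikt} dt. -/

import Mathlib

open scoped Real

open Complex Finset intervalIntegral

noncomputable section FejerAux

/-- The Fourier coefficient appearing in the statement. -/
def fjHat (f : ℝ → ℂ) (k : ℤ) : ℂ :=
  (1 / (2 * (π : ℂ))) * ∫ s in (-π : ℝ)..π, f s * Complex.exp (-(Complex.I * (k : ℂ) * (s : ℂ)))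

/-- The (unnormalized) Fejér kernel. -/
def fjKer (N : ℕ) (u : ℝ) : ℂ :=
  ∑ n ∈ Finset.range N, ∑ k ∈ Finset.Icc (-(n : ℤ)) (n : ℤ), Complex.exp (Complex.I * k * u)

/-- The real Fejér kernel. -/
def fjKerR (N : ℕ) (u : ℝ) : ℝ :=
  Complex.normSq (∑ j ∈ Finset.range N, Complex.exp (Complex.I * j * u))

theorem fj_key_int (m : ℤ) :
    (∫ s in (-π:ℝ)..π, Complex.exp (Complex.I * m * s)) = if m = 0 then 2*π else 0 := by
  split_ifs with h
  · simp [h]; push_cast; ring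
  · have hc : Complex.I * m ≠ 0 := by simp [Complex.I_ne_zero, h]
    rw [show (fun s : ℝ => Complex.exp (Complex.I * m * s)) = fun s : ℝ => Complex.exp ((Complex.I * m) * s) from rfl]
    rw [integral_exp_mul_complex hc]
    have h1 : Complex.exp (Complex.I * m * (π:ℝ)) = Complex.exp (Complex.I * m * ((-π:ℝ):ℝ)) := by
      have h0 := Complex.exp_int_mul_two_pi_mul_I m
      calc Complex.exp (Complex.I * m * (π:ℝ))
          = Complex.exp (Complex.I * m * ((-π:ℝ):ℝ)) * Complex.exp ((m:ℂ) * (2*π*Complex.I)) := by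
            rw [← Complex.exp_add]; push_cast; ring_nf
        _ = _ := by rw [h0, mul_one]
    rw [h1, sub_self, zero_div]; simp

theorem fj_dir_eq (z : ℂ) (n : ℕ) :
    ∑ k ∈ Finset.Icc (-(n:ℤ)) (n:ℤ), z ^ k = ∑ j ∈ Finset.range (2*n+1), z ^ ((j:ℤ) - n) := by
  refine Finset.sum_nbij' (i := fun (k:ℤ) => (k + n).toNat) (j := fun (j:ℕ) => (j:ℤ) - n)
    ?_ ?_ ?_ ?_ ?_
  · intro k hk; simp only [Finset.mem_Icc, Finset.mem_range] at *; omega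
  · intro j hj; simp only [Finset.mem_Icc, Finset.mem_range] at *; omega
  · intro k hk; simp only [Finset.mem_Icc, Finset.mem_range] at *; omega
  · intro j hj; simp only [Finset.mem_Icc, Finset.mem_range] at *; omega
  · intro k hk; simp only [Finset.mem_Icc, Finset.mem_range] at *
    congr 1; omega

theorem fj_kernel_sq (z : ℂ) (hz : z ≠ 0) (N : ℕ) :
    ∑ n ∈ Finset.range N, ∑ k ∈ Finset.Icc (-(n:ℤ)) (n:ℤ), z ^ k
      = (∑ j ∈ Finset.range N, z ^ (j:ℤ)) * (∑ l ∈ Finset.range N, z ^ (-(l:ℤ))) := by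
  have hB : ∀ M : ℕ, (∑ j ∈ Finset.range M, z ^ (j:ℤ)) * (∑ l ∈ Finset.range M, z ^ (-(l:ℤ)))
      = ∑ j ∈ Finset.range M, ∑ l ∈ Finset.range M, z ^ ((j:ℤ) - l) := by
    intro M
    rw [Finset.sum_mul_sum]
    refine Finset.sum_congr rfl fun j _ => Finset.sum_congr rfl fun l _ => ?_
    rw [← zpow_add₀ hz]; ring_nf
  rw [hB]
  induction N with
  | zero => simp
  | succ N ih =>
    rw [Finset.sum_range_succ, ih, fj_dir_eq]
    have hR : ∑ j ∈ Finset.range (N+1), ∑ l ∈ Finset.range (N+1), z ^ ((j:ℤ) - l)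
        = ∑ j ∈ Finset.range N, ∑ l ∈ Finset.range N, z ^ ((j:ℤ) - l)
          + (∑ j ∈ Finset.range N, z ^ ((j:ℤ) - N)
            + (∑ l ∈ Finset.range N, z ^ ((N:ℤ) - l) + z ^ ((N:ℤ) - N))) := by
      rw [Finset.sum_range_succ (fun j => ∑ l ∈ Finset.range (N+1), z ^ ((j:ℤ) - l))]
      simp only [Finset.sum_range_succ, Finset.sum_add_distrib]
      ring
    have h2 : ∑ j ∈ Finset.range (2*N+1), z ^ ((j:ℤ) - N)
        = ∑ j ∈ Finset.range N, z ^ ((j:ℤ) - N) + (∑ i ∈ Finset.range N, z ^ (i:ℤ) + z ^ (N:ℤ)) := by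
      have he : 2*N+1 = N + (N+1) := by omega
      rw [he, Finset.sum_range_add, Finset.sum_range_succ]
      congr 1
      congr 1
      · refine Finset.sum_congr rfl fun i hi => ?_
        congr 1; push_cast; ring
      · congr 1; push_cast; ring
    have h3 : ∑ l ∈ Finset.range N, z ^ ((N:ℤ) - l) = ∑ i ∈ Finset.range N, z ^ ((i:ℤ) + 1) := by
      rw [← Finset.sum_range_reflect (fun i => z ^ ((i:ℤ) + 1)) N]
      refine Finset.sum_congr rfl fun i hi => ?_
      simp only [Finset.mem_range] at hi
      congr 1
      have : ((N - 1 - i : ℕ) : ℤ) = (N:ℤ) - 1 - i := by omega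
      rw [this]; ring
    have h4 : ∑ i ∈ Finset.range N, z ^ ((i:ℤ) + 1) + z ^ ((0:ℕ):ℤ)
        = ∑ i ∈ Finset.range N, z ^ (i:ℤ) + z ^ (N:ℤ) := by
      have h5 := Finset.sum_range_succ' (fun i => z ^ ((i:ℕ):ℤ)) N
      rw [Finset.sum_range_succ] at h5
      have hc : ∑ i ∈ Finset.range N, z ^ ((i:ℤ)+1) = ∑ i ∈ Finset.range N, z ^ (((i+1:ℕ)):ℤ) := by
        refine Finset.sum_congr rfl fun i _ => congr_arg (z ^ ·) (by omega)
      rw [hc]; exact h5.symm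
    have h6 : z ^ ((N:ℤ) - N) = z ^ ((0:ℕ):ℤ) := by norm_num
    rw [hR, h2, h3, h6]
    linear_combination -h4

theorem fj_exp_zpow (u : ℝ) (k : ℤ) :
    Complex.exp (Complex.I * k * u) = Complex.exp (Complex.I * u) ^ k := by
  rw [← Complex.exp_int_mul]; ring_nf

theorem fjKer_eq (N : ℕ) (u : ℝ) : fjKer N u = (fjKerR N u : ℂ) := by
  have hz : Complex.exp (Complex.I * u) ≠ 0 := Complex.exp_ne_zero _
  unfold fjKer fjKerR
  have h1 : ∀ (k : ℤ), Complex.exp (Complex.I * k * u) = Complex.exp (Complex.I * u) ^ k :=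
    fun k => fj_exp_zpow u k
  calc ∑ n ∈ Finset.range N, ∑ k ∈ Finset.Icc (-(n : ℤ)) (n : ℤ), Complex.exp (Complex.I * k * u)
      = ∑ n ∈ Finset.range N, ∑ k ∈ Finset.Icc (-(n : ℤ)) (n : ℤ), Complex.exp (Complex.I * u) ^ k := by
        refine Finset.sum_congr rfl fun n _ => Finset.sum_congr rfl fun k _ => h1 k
    _ = (∑ j ∈ Finset.range N, Complex.exp (Complex.I * u) ^ (j:ℤ))
        * (∑ l ∈ Finset.range N, Complex.exp (Complex.I * u) ^ (-(l:ℤ))) := fj_kernel_sq _ hz N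
    _ = (∑ j ∈ Finset.range N, Complex.exp (Complex.I * j * u))
        * (starRingEnd ℂ) (∑ j ∈ Finset.range N, Complex.exp (Complex.I * j * u)) := by
        rw [map_sum]
        congr 1
        · exact Finset.sum_congr rfl fun j _ => (h1 j).symm
        · refine Finset.sum_congr rfl fun l _ => ?_
          have hc : (starRingEnd ℂ) (Complex.exp (Complex.I * l * u))
              = Complex.exp (((-(l:ℤ) : ℤ):ℂ) * (Complex.I * u)) := by
            rw [← Complex.exp_conj]
            congr 1
            simp only [map_mul, Complex.conj_I, Complex.conj_natCast, Complex.conj_ofReal]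
            push_cast; ring
          rw [hc, Complex.exp_int_mul]
    _ = _ := by rw [Complex.mul_conj]

theorem fjKerR_nonneg (N : ℕ) (u : ℝ) : 0 ≤ fjKerR N u := Complex.normSq_nonneg _

theorem fjKerR_cont (N : ℕ) (t : ℝ) : Continuous fun s : ℝ => fjKerR N (t - s) := by
  unfold fjKerR
  exact Complex.continuous_normSq.comp (by fun_prop)

theorem fj_cont_exp (t : ℝ) (k : ℤ) :
    Continuous fun s : ℝ => Complex.exp (Complex.I * k * ((t : ℂ) - (s : ℂ))) :=
  Complex.continuous_exp.comp (by fun_prop)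

theorem fjKer_apply (N : ℕ) (t s : ℝ) :
    fjKer N (t - s) = ∑ n ∈ Finset.range N, ∑ k ∈ Finset.Icc (-(n : ℤ)) (n : ℤ),
      Complex.exp (Complex.I * k * ((t:ℂ) - (s:ℂ))) := by
  unfold fjKer; push_cast; rfl

theorem fj_conv_rep (g : ℝ → ℂ) (hg : Continuous g) (N : ℕ) (t : ℝ) :
    ∑ n ∈ Finset.range N, ∑ k ∈ Finset.Icc (-(n : ℤ)) (n : ℤ),
        fjHat g k * Complex.exp (Complex.I * k * t)
      = (1 / (2 * (π : ℂ))) * ∫ s in (-π : ℝ)..π, g s * fjKer N (t - s) := by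
  have hck : ∀ k : ℤ, Continuous fun s : ℝ => g s * Complex.exp (Complex.I * k * ((t:ℂ) - (s:ℂ))) :=
    fun k => hg.mul (fj_cont_exp t k)
  have hcn : ∀ n : ℕ, Continuous fun s : ℝ => ∑ k ∈ Finset.Icc (-(n : ℤ)) (n : ℤ),
      g s * Complex.exp (Complex.I * k * ((t:ℂ) - (s:ℂ))) :=
    fun n => continuous_finset_sum _ fun k _ => hck k
  have h1 : (∫ s in (-π : ℝ)..π, g s * fjKer N (t - s))
      = ∑ n ∈ Finset.range N, ∑ k ∈ Finset.Icc (-(n : ℤ)) (n : ℤ),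
          ∫ s in (-π : ℝ)..π, g s * Complex.exp (Complex.I * k * ((t:ℂ) - (s:ℂ))) := by
    simp_rw [fjKer_apply, Finset.mul_sum]
    rw [intervalIntegral.integral_finset_sum (μ := MeasureTheory.volume)
      (f := fun (n : ℕ) (s : ℝ) => ∑ k ∈ Finset.Icc (-(n : ℤ)) (n : ℤ),
        g s * Complex.exp (Complex.I * k * ((t:ℂ) - (s:ℂ))))
      (fun n _ => (hcn n).intervalIntegrable _ _)]
    exact Finset.sum_congr rfl fun n _ => by
      rw [intervalIntegral.integral_finset_sum (μ := MeasureTheory.volume)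
        (f := fun (k : ℤ) (s : ℝ) => g s * Complex.exp (Complex.I * k * ((t:ℂ) - (s:ℂ))))
        (fun k _ => (hck k).intervalIntegrable _ _)]
  rw [h1, Finset.mul_sum]
  refine Finset.sum_congr rfl fun n _ => ?_
  rw [Finset.mul_sum]
  refine Finset.sum_congr rfl fun k _ => ?_
  have h2 : ∀ s : ℝ, g s * Complex.exp (Complex.I * k * ((t:ℂ) - (s:ℂ)))
      = (g s * Complex.exp (-(Complex.I * (k:ℂ) * (s:ℂ)))) * Complex.exp (Complex.I * k * t) := by
    intro s
    rw [mul_assoc (g s), ← Complex.exp_add]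
    congr 2
    ring
  simp_rw [h2]
  rw [intervalIntegral.integral_mul_const]
  unfold fjHat
  ring

theorem fj_mass (N : ℕ) (t : ℝ) :
    (∫ s in (-π : ℝ)..π, fjKer N (t - s)) = (N : ℂ) * (2 * π) := by
  have h0 : ∀ k : ℤ, (∫ s in (-π : ℝ)..π, Complex.exp (Complex.I * k * ((t:ℂ) - (s:ℂ))))
      = if k = 0 then 2 * (π:ℂ) else 0 := by
    intro k
    have h3 : ∀ s : ℝ, Complex.exp (Complex.I * k * ((t:ℂ) - (s:ℂ)))
        = Complex.exp (Complex.I * ((-k : ℤ):ℂ) * s) * Complex.exp (Complex.I * k * t) := by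
      intro s; rw [← Complex.exp_add]; congr 1; push_cast; ring
    simp_rw [h3]
    rw [intervalIntegral.integral_mul_const, fj_key_int]
    by_cases hk : k = 0
    · simp [hk]
    · simp [hk, neg_eq_zero]
  have h1 : ∀ n : ℕ,
      (∫ s in (-π : ℝ)..π, ∑ k ∈ Finset.Icc (-(n : ℤ)) (n : ℤ),
          Complex.exp (Complex.I * k * ((t:ℂ) - (s:ℂ))))
        = 2 * (π:ℂ) := by
    intro n
    rw [intervalIntegral.integral_finset_sum (μ := MeasureTheory.volume)
      (f := fun (k:ℤ) (s:ℝ) => Complex.exp (Complex.I * k * ((t:ℂ) - (s:ℂ))))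
      (fun k _ => (fj_cont_exp t k).intervalIntegrable _ _)]
    rw [Finset.sum_congr rfl (fun k _ => h0 k),
      Finset.sum_ite_eq' (Finset.Icc (-(n : ℤ)) (n : ℤ)) 0 (fun _ => 2*(π:ℂ))]
    simp
  simp_rw [fjKer_apply]
  rw [intervalIntegral.integral_finset_sum (μ := MeasureTheory.volume)
    (f := fun (n:ℕ) (s:ℝ) => ∑ k ∈ Finset.Icc (-(n : ℤ)) (n : ℤ),
      Complex.exp (Complex.I * k * ((t:ℂ) - (s:ℂ))))
    (fun n _ => (continuous_finset_sum _ fun k _ => fj_cont_exp t k).intervalIntegrable _ _)]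
  rw [Finset.sum_congr rfl (fun n _ => h1 n), Finset.sum_const, Finset.card_range]
  simp [mul_comm]

theorem fj_massR (N : ℕ) (t : ℝ) :
    (∫ s in (-π : ℝ)..π, fjKerR N (t - s)) = N * (2 * π) := by
  have h := fj_mass N t
  simp_rw [fjKer_eq] at h
  rw [intervalIntegral.integral_ofReal] at h
  exact_mod_cast h

theorem fj_bound (g : ℝ → ℂ) (hg : Continuous g) (C : ℝ) (hC : ∀ s, ‖g s‖ ≤ C)
    (N : ℕ) (t : ℝ) :
    ‖(1 / (2 * (π : ℂ))) * ∫ s in (-π : ℝ)..π, g s * fjKer N (t - s)‖ ≤ C * N := by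
  have hC0 : 0 ≤ C := le_trans (norm_nonneg _) (hC 0)
  have hab : (-π : ℝ) ≤ π := by linarith [Real.pi_pos]
  have h1 : ‖∫ s in (-π : ℝ)..π, g s * fjKer N (t - s)‖
      ≤ ∫ s in (-π : ℝ)..π, ‖g s * fjKer N (t - s)‖ :=
    intervalIntegral.norm_integral_le_integral_norm hab
  have h2 : (∫ s in (-π : ℝ)..π, ‖g s * fjKer N (t - s)‖)
      ≤ ∫ s in (-π : ℝ)..π, C * fjKerR N (t - s) := by
    have hnorm : ∀ s : ℝ, ‖g s * fjKer N (t - s)‖ = ‖g s‖ * fjKerR N (t - s) := by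
      intro s
      rw [norm_mul, fjKer_eq, Complex.norm_real, Real.norm_eq_abs,
        _root_.abs_of_nonneg (fjKerR_nonneg N _)]
    simp_rw [hnorm]
    refine intervalIntegral.integral_mono_on hab ?_ ?_ ?_
    · exact ((hg.norm.mul (fjKerR_cont N t))).intervalIntegrable _ _
    · exact ((continuous_const.mul (fjKerR_cont N t))).intervalIntegrable _ _
    · intro s _
      exact mul_le_mul_of_nonneg_right (hC s) (fjKerR_nonneg N _)
  have h3 : (∫ s in (-π : ℝ)..π, C * fjKerR N (t - s)) = C * (N * (2*π)) := by
    rw [intervalIntegral.integral_const_mul, fj_massR]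
  have h4 : ‖(1 / (2 * (π:ℂ)))‖ = 1 / (2*π) := by
    rw [norm_div, norm_one]
    rw [show (2 * (π:ℂ)) = ((2 * π : ℝ) : ℂ) by push_cast; ring, Complex.norm_real,
      Real.norm_eq_abs, _root_.abs_of_pos (by positivity)]
  rw [norm_mul, h4]
  calc 1 / (2*π) * ‖∫ s in (-π : ℝ)..π, g s * fjKer N (t - s)‖
      ≤ 1 / (2*π) * (C * (N * (2*π))) := by
        refine mul_le_mul_of_nonneg_left ?_ (by positivity)
        exact le_trans h1 (le_trans h2 (le_of_eq h3))
    _ = C * N := by field_simp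

theorem fj_two_pi_ne : (2 * (π:ℂ)) ≠ 0 := by
  simp [Real.pi_ne_zero, Complex.ofReal_ne_zero]

theorem fj_hat_exp (m k : ℤ) :
    fjHat (fun s => Complex.exp (Complex.I * m * s)) k = if k = m then 1 else 0 := by
  unfold fjHat
  have h1 : ∀ s : ℝ, Complex.exp (Complex.I * m * s) * Complex.exp (-(Complex.I * (k:ℂ) * (s:ℂ)))
      = Complex.exp (Complex.I * ((m - k : ℤ):ℂ) * s) := by
    intro s; rw [← Complex.exp_add]; congr 1; push_cast; ring
  simp_rw [h1]
  rw [fj_key_int]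
  by_cases h : k = m
  · simp [h, sub_eq_zero]
    have hπ : (π:ℂ) ≠ 0 := Complex.ofReal_ne_zero.mpr Real.pi_ne_zero
    field_simp
  · have : ¬ (m - k = 0) := by omega
    simp [h, this]

theorem fj_norm_exp (m : ℤ) (t : ℝ) : ‖Complex.exp (Complex.I * m * t)‖ = 1 := by
  rw [show Complex.I * (m:ℂ) * (t:ℝ) = ((m * t : ℝ):ℂ) * Complex.I by push_cast; ring]
  exact Complex.norm_exp_ofReal_mul_I _

-- fjHat of a trig polynomial

theorem fj_hat_poly (c : ℤ →₀ ℂ) (k : ℤ) :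
    fjHat (fun s => ∑ m ∈ c.support, c m * Complex.exp (Complex.I * m * s)) k = c k := by
  unfold fjHat
  have h1 : ∀ s : ℝ,
      (∑ m ∈ c.support, c m * Complex.exp (Complex.I * m * s))
          * Complex.exp (-(Complex.I * (k:ℂ) * (s:ℂ)))
        = ∑ m ∈ c.support, c m * Complex.exp (Complex.I * ((m - k : ℤ):ℂ) * s) := by
    intro s
    rw [Finset.sum_mul]
    refine Finset.sum_congr rfl fun m _ => ?_
    rw [mul_assoc, ← Complex.exp_add]
    congr 2; push_cast; ring
  simp_rw [h1]
  rw [intervalIntegral.integral_finset_sum (μ := MeasureTheory.volume)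
    (f := fun (m : ℤ) (s : ℝ) => c m * Complex.exp (Complex.I * ((m - k : ℤ):ℂ) * s))
    (fun m _ => (continuous_const.mul (Complex.continuous_exp.comp (by fun_prop))).intervalIntegrable _ _)]
  have h2 : ∀ m ∈ c.support,
      (∫ s in (-π:ℝ)..π, c m * Complex.exp (Complex.I * ((m - k : ℤ):ℂ) * s))
        = c m * (if m = k then 2*(π:ℂ) else 0) := by
    intro m _
    rw [intervalIntegral.integral_const_mul, fj_key_int]
    congr 1
    by_cases h : m = k
    · simp [h]
    · have : ¬ (m - k = 0) := by omega
      simp [h, this]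
  rw [Finset.sum_congr rfl h2]
  simp_rw [mul_ite, mul_zero]
  rw [Finset.sum_ite_eq' c.support k (fun m => c m * (2*(π:ℂ)))]
  by_cases hk : k ∈ c.support
  · simp only [hk, if_true]
    have hπ : (π:ℂ) ≠ 0 := Complex.ofReal_ne_zero.mpr Real.pi_ne_zero
    field_simp
  · simp only [hk, if_false]
    rw [Finsupp.notMem_support_iff.mp hk]
    ring

theorem fj_cnt (a N : ℕ) :
    ∑ n ∈ Finset.range N, (if a ≤ n then (1:ℂ) else 0) = ((N - min N a : ℕ) : ℂ) := by
  induction N with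
  | zero => simp
  | succ N ih =>
    rw [Finset.sum_range_succ, ih]
    by_cases h : a ≤ N
    · rw [if_pos h]
      have : (N + 1) - min (N+1) a = (N - min N a) + 1 := by omega
      rw [this]; push_cast; ring
    · rw [if_neg h]
      have : (N + 1) - min (N+1) a = N - min N a := by omega
      rw [this]; ring

theorem fj_sigma_poly (c : ℤ →₀ ℂ) (N : ℕ) (hN : 1 ≤ N) (t : ℝ) :
    ‖(∑ m ∈ c.support, c m * Complex.exp (Complex.I * m * t))
        - (1/(N:ℂ)) * ∑ n ∈ Finset.range N, ∑ k ∈ Finset.Icc (-(n:ℤ)) (n:ℤ),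
            c k * Complex.exp (Complex.I * k * t)‖
      ≤ (∑ m ∈ c.support, ‖c m‖ * m.natAbs) / N := by
  have hNC : ((N:ℂ)) ≠ 0 := by
    simp only [ne_eq, Nat.cast_eq_zero]; omega
  -- inner sum rewrite
  have hinner : ∀ n : ℕ, (∑ k ∈ Finset.Icc (-(n:ℤ)) (n:ℤ), c k * Complex.exp (Complex.I * k * t))
      = ∑ m ∈ c.support, (if m.natAbs ≤ n then (1:ℂ) else 0) * (c m * Complex.exp (Complex.I * m * t)) := by
    intro n
    have e1 : (∑ k ∈ Finset.Icc (-(n:ℤ)) (n:ℤ), c k * Complex.exp (Complex.I * k * t))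
        = ∑ k ∈ Finset.Icc (-(n:ℤ)) (n:ℤ) ∩ c.support, c k * Complex.exp (Complex.I * k * t) := by
      refine (Finset.sum_subset Finset.inter_subset_left ?_).symm
      intro k _ hk
      have : k ∉ c.support := fun hmem => hk (Finset.mem_inter.mpr ⟨‹_›, hmem⟩)
      rw [Finsupp.notMem_support_iff.mp this, zero_mul]
    have e2 : ∑ m ∈ c.support, (if m.natAbs ≤ n then (1:ℂ) else 0) * (c m * Complex.exp (Complex.I * m * t))
        = ∑ m ∈ c.support ∩ Finset.Icc (-(n:ℤ)) (n:ℤ), c m * Complex.exp (Complex.I * m * t) := by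
      rw [← Finset.sum_ite_mem]
      refine Finset.sum_congr rfl fun m _ => ?_
      have : m ∈ Finset.Icc (-(n:ℤ)) (n:ℤ) ↔ m.natAbs ≤ n := by
        simp only [Finset.mem_Icc]; omega
      by_cases h : m.natAbs ≤ n
      · rw [if_pos (this.mpr h), if_pos h, one_mul]
      · rw [if_neg (fun hm => h (this.mp hm)), if_neg h, zero_mul]
    rw [e1, e2, Finset.inter_comm]
  -- swap sums
  have hswap : (∑ n ∈ Finset.range N, ∑ k ∈ Finset.Icc (-(n:ℤ)) (n:ℤ),
        c k * Complex.exp (Complex.I * k * t))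
      = ∑ m ∈ c.support, ((N - min N m.natAbs : ℕ) : ℂ) * (c m * Complex.exp (Complex.I * m * t)) := by
    rw [Finset.sum_congr rfl (fun n _ => hinner n), Finset.sum_comm]
    refine Finset.sum_congr rfl fun m _ => ?_
    rw [← Finset.sum_mul, fj_cnt]
  rw [hswap, Finset.mul_sum]
  rw [← Finset.sum_sub_distrib]
  have hterm : ∀ m ∈ c.support,
      c m * Complex.exp (Complex.I * m * t)
          - (1/(N:ℂ)) * (((N - min N m.natAbs : ℕ) : ℂ) * (c m * Complex.exp (Complex.I * m * t)))
        = (((min N m.natAbs : ℕ):ℂ)/N) * (c m * Complex.exp (Complex.I * m * t)) := by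
    intro m _
    have hc : ((N - min N m.natAbs : ℕ) : ℂ) = (N:ℂ) - ((min N m.natAbs : ℕ):ℂ) := by
      have : min N m.natAbs ≤ N := min_le_left _ _
      push_cast [Nat.cast_sub this]
      ring
    rw [hc]
    field_simp
    ring
  rw [Finset.sum_congr rfl hterm]
  refine le_trans (norm_sum_le _ _) ?_
  rw [Finset.sum_div]
  refine Finset.sum_le_sum fun m _ => ?_
  rw [norm_mul, norm_mul, fj_norm_exp, mul_one]
  have h1 : ‖(((min N m.natAbs : ℕ):ℂ)/(N:ℂ))‖ = ((min N m.natAbs : ℕ):ℝ)/(N:ℝ) := by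
    rw [norm_div]
    simp [Complex.norm_natCast]
  rw [h1]
  have hNpos : (0:ℝ) < N := by exact_mod_cast Nat.pos_of_ne_zero (by omega)
  have hle : ((N ⊓ m.natAbs : ℕ):ℝ) / N ≤ (m.natAbs:ℝ)/N :=
    (div_le_div_iff_of_pos_right hNpos).mpr (by exact_mod_cast min_le_right _ _)
  rw [mul_div_assoc, mul_comm]
  exact mul_le_mul_of_nonneg_left hle (norm_nonneg (c m))

theorem fj_dense (f : ℝ → ℂ) (hf : Continuous f) (hper : ∀ t : ℝ, f (t + 2 * π) = f t)
    (ε : ℝ) (hε : 0 < ε) :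
    ∃ c : ℤ →₀ ℂ, ∀ t : ℝ,
      ‖f t - ∑ m ∈ c.support, c m * Complex.exp (Complex.I * m * t)‖ ≤ ε := by
  haveI : Fact (0 < 2 * π) := ⟨by positivity⟩
  have hp : Function.Periodic f (2 * π) := hper
  have hcont : Continuous hp.lift := hf.quotient_liftOn' _
  set F : C(AddCircle (2 * π), ℂ) := ⟨hp.lift, hcont⟩ with hF
  have hmem : F ∈ closure ((Submodule.span ℂ (Set.range (@fourier (2*π)))) : Set C(AddCircle (2*π), ℂ)) := by
    have h2 : F ∈ (Submodule.span ℂ (Set.range (@fourier (2*π)))).topologicalClosure := by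
      rw [span_fourier_closure_eq_top (T := 2*π)]; trivial
    exact h2
  rw [Metric.mem_closure_iff] at hmem
  obtain ⟨P, hP, hdist⟩ := hmem ε hε
  rw [SetLike.mem_coe, Finsupp.mem_span_range_iff_exists_finsupp] at hP
  obtain ⟨c, hc⟩ := hP
  refine ⟨c, fun t => ?_⟩
  have hπ : (π:ℝ) ≠ 0 := Real.pi_ne_zero
  have hPt : P ((t : ℝ) : AddCircle (2*π)) = ∑ m ∈ c.support, c m * Complex.exp (Complex.I * m * t) := by
    rw [← hc, Finsupp.sum]
    rw [ContinuousMap.coe_sum, Finset.sum_apply]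
    refine Finset.sum_congr rfl fun m _ => ?_
    rw [ContinuousMap.coe_smul, Pi.smul_apply, smul_eq_mul]
    congr 1
    rw [fourier_coe_apply]
    congr 1
    have hπc : (π:ℂ) ≠ 0 := Complex.ofReal_ne_zero.mpr Real.pi_ne_zero
    field_simp
    push_cast; ring
  have hFt : F ((t : ℝ) : AddCircle (2*π)) = f t := rfl
  calc ‖f t - ∑ m ∈ c.support, c m * Complex.exp (Complex.I * m * t)‖
      = dist (F ((t : ℝ) : AddCircle (2*π))) (P ((t : ℝ) : AddCircle (2*π))) := by
        rw [hFt, hPt, dist_eq_norm]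
    _ ≤ dist F P := ContinuousMap.dist_apply_le_dist _
    _ ≤ ε := le_of_lt hdist

theorem fj_hat_sub (f g : ℝ → ℂ) (hf : Continuous f) (hg : Continuous g) (k : ℤ) :
    fjHat (fun s => f s - g s) k = fjHat f k - fjHat g k := by
  unfold fjHat
  have hexp : Continuous fun s : ℝ => Complex.exp (-(Complex.I * (k:ℂ) * (s:ℂ))) :=
    Complex.continuous_exp.comp (by fun_prop)
  rw [← mul_sub]
  congr 1
  rw [← intervalIntegral.integral_sub
    (f := fun s : ℝ => f s * Complex.exp (-(Complex.I * (k:ℂ) * (s:ℂ))))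
    (g := fun s : ℝ => g s * Complex.exp (-(Complex.I * (k:ℂ) * (s:ℂ))))
    ((hf.mul hexp).intervalIntegrable _ _)
    ((hg.mul hexp).intervalIntegrable _ _)]
  congr 1
  funext s
  ring

end FejerAux

/-- Fejér's theorem: for a continuous `2π`-periodic function `f : ℝ → ℂ`, the Cesàro means
`(1/N) ∑_{n=0}^{N-1} S_n(f)` of the Fourier partial sums
`S_n(f)(t) = ∑_{k=-n}^{n} f̂(k) e^{ikt}`, with
`f̂(k) = (1/2π) ∫_{-π}^{π} f(s) e^{-iks} ds`, converge to `f` uniformly as `N → ∞`. -/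
theorem fejer_cesaro_uniform_convergence (f : ℝ → ℂ) (hf : Continuous f)
    (hper : ∀ t : ℝ, f (t + 2 * π) = f t) :
    TendstoUniformly
      (fun (N : ℕ) (t : ℝ) => (1 / (N : ℂ)) *
        ∑ n ∈ Finset.range N, ∑ k ∈ Finset.Icc (-(n : ℤ)) (n : ℤ),
          ((1 / (2 * (π : ℂ))) *
              ∫ s in (-π : ℝ)..π, f s * Complex.exp (-(Complex.I * (k : ℂ) * (s : ℂ)))) *
            Complex.exp (Complex.I * (k : ℂ) * (t : ℂ)))
      f Filter.atTop := by
  rw [Metric.tendstoUniformly_iff]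
  intro ε hε
  obtain ⟨c, hc⟩ := fj_dense f hf hper (ε/4) (by positivity)
  set P : ℝ → ℂ := fun t => ∑ m ∈ c.support, c m * Complex.exp (Complex.I * m * t) with hPdef
  have hPcont : Continuous P :=
    continuous_finset_sum _ fun m _ =>
      continuous_const.mul (Complex.continuous_exp.comp (by fun_prop))
  have hgcont : Continuous (fun s => f s - P s) := hf.sub hPcont
  set M : ℝ := ∑ m ∈ c.support, ‖c m‖ * m.natAbs with hMdef
  have hM0 : 0 ≤ M := Finset.sum_nonneg fun m _ => by positivity
  set N₀ : ℕ := ⌈4 * M / ε⌉₊ + 1 with hN₀def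
  rw [Filter.eventually_atTop]
  refine ⟨N₀, fun N hN t => ?_⟩
  have hN1 : 1 ≤ N := le_trans (by omega) hN
  have hNR : (0:ℝ) < N := by exact_mod_cast Nat.pos_of_ne_zero (by omega)
  have hNC : ((N:ℂ)) ≠ 0 := by
    simp only [ne_eq, Nat.cast_eq_zero]; omega
  -- M / N < ε / 4
  have hMN : M / N < ε / 4 := by
    have h1 : 4 * M / ε < N₀ := by
      calc 4 * M / ε ≤ (⌈4 * M / ε⌉₊ : ℝ) := Nat.le_ceil _
        _ < N₀ := by rw [hN₀def]; push_cast; linarith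
    have h2 : (N₀ : ℝ) ≤ N := by exact_mod_cast hN
    have h3 : 4 * M / ε < N := lt_of_lt_of_le h1 h2
    rw [div_lt_iff₀ hNR]
    rw [div_lt_iff₀ hε] at h3
    nlinarith
  -- split the sum
  have hsplit : ∀ k : ℤ, fjHat f k = fjHat (fun s => f s - P s) k + fjHat P k := by
    intro k
    rw [fj_hat_sub f P hf hPcont k]
    ring
  have hsum : (∑ n ∈ Finset.range N, ∑ k ∈ Finset.Icc (-(n : ℤ)) (n : ℤ),
        fjHat f k * Complex.exp (Complex.I * k * t))
      = (∑ n ∈ Finset.range N, ∑ k ∈ Finset.Icc (-(n : ℤ)) (n : ℤ),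
          fjHat (fun s => f s - P s) k * Complex.exp (Complex.I * k * t))
        + (∑ n ∈ Finset.range N, ∑ k ∈ Finset.Icc (-(n : ℤ)) (n : ℤ),
          fjHat P k * Complex.exp (Complex.I * k * t)) := by
    rw [← Finset.sum_add_distrib]
    refine Finset.sum_congr rfl fun n _ => ?_
    rw [← Finset.sum_add_distrib]
    refine Finset.sum_congr rfl fun k _ => ?_
    rw [hsplit k]
    ring
  -- the three pieces
  have hA : ‖(1/(N:ℂ)) * ∑ n ∈ Finset.range N, ∑ k ∈ Finset.Icc (-(n : ℤ)) (n : ℤ),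
        fjHat (fun s => f s - P s) k * Complex.exp (Complex.I * k * t)‖ ≤ ε/4 := by
    rw [fj_conv_rep _ hgcont N t, norm_mul]
    have hb := fj_bound _ hgcont (ε/4) (fun s => hc s) N t
    have hn : ‖(1/(N:ℂ))‖ = 1/(N:ℝ) := by
      rw [norm_div, norm_one, Complex.norm_natCast]
    rw [hn]
    calc 1/(N:ℝ) * ‖(1 / (2 * (π : ℂ))) * ∫ s in (-π : ℝ)..π,
            (f s - P s) * fjKer N (t - s)‖
        ≤ 1/(N:ℝ) * (ε/4 * N) := by
          refine mul_le_mul_of_nonneg_left hb (by positivity)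
      _ = ε/4 := by field_simp
  have hB : ‖P t - (1/(N:ℂ)) * ∑ n ∈ Finset.range N, ∑ k ∈ Finset.Icc (-(n : ℤ)) (n : ℤ),
        fjHat P k * Complex.exp (Complex.I * k * t)‖ ≤ ε/4 := by
    have hrw : (∑ n ∈ Finset.range N, ∑ k ∈ Finset.Icc (-(n : ℤ)) (n : ℤ),
          fjHat P k * Complex.exp (Complex.I * k * t))
        = ∑ n ∈ Finset.range N, ∑ k ∈ Finset.Icc (-(n : ℤ)) (n : ℤ),
          c k * Complex.exp (Complex.I * k * t) := by
      refine Finset.sum_congr rfl fun n _ => Finset.sum_congr rfl fun k _ => ?_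
      rw [hPdef, fj_hat_poly c k]
    rw [hrw]
    refine le_trans (fj_sigma_poly c N hN1 t) ?_
    rw [← hMdef]
    exact le_of_lt hMN
  -- assemble
  rw [dist_eq_norm]
  have hfP : ‖f t - P t‖ ≤ ε/4 := hc t
  calc ‖f t - (1/(N:ℂ)) * ∑ n ∈ Finset.range N, ∑ k ∈ Finset.Icc (-(n : ℤ)) (n : ℤ),
          fjHat f k * Complex.exp (Complex.I * k * t)‖
      = ‖(f t - P t)
          + (P t - (1/(N:ℂ)) * ∑ n ∈ Finset.range N, ∑ k ∈ Finset.Icc (-(n : ℤ)) (n : ℤ),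
              fjHat P k * Complex.exp (Complex.I * k * t))
          + (-((1/(N:ℂ)) * ∑ n ∈ Finset.range N, ∑ k ∈ Finset.Icc (-(n : ℤ)) (n : ℤ),
              fjHat (fun s => f s - P s) k * Complex.exp (Complex.I * k * t)))‖ := by
        rw [hsum]
        congr 1
        ring
    _ ≤ ‖(f t - P t)
          + (P t - (1/(N:ℂ)) * ∑ n ∈ Finset.range N, ∑ k ∈ Finset.Icc (-(n : ℤ)) (n : ℤ),
              fjHat P k * Complex.exp (Complex.I * k * t))‖
        + ‖-((1/(N:ℂ)) * ∑ n ∈ Finset.range N, ∑ k ∈ Finset.Icc (-(n : ℤ)) (n : ℤ),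
              fjHat (fun s => f s - P s) k * Complex.exp (Complex.I * k * t))‖ :=
        norm_add_le _ _
    _ ≤ (‖f t - P t‖
          + ‖P t - (1/(N:ℂ)) * ∑ n ∈ Finset.range N, ∑ k ∈ Finset.Icc (-(n : ℤ)) (n : ℤ),
              fjHat P k * Complex.exp (Complex.I * k * t)‖)
        + ‖(1/(N:ℂ)) * ∑ n ∈ Finset.range N, ∑ k ∈ Finset.Icc (-(n : ℤ)) (n : ℤ),
              fjHat (fun s => f s - P s) k * Complex.exp (Complex.I * k * t)‖ := by
        rw [norm_neg]
        exact add_le_add (norm_add_le _ _) le_rfl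
    _ ≤ (ε/4 + ε/4) + ε/4 := by
        refine add_le_add (add_le_add hfP hB) hA
    _ < ε := by linarith
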